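/- Let n ≥ 2 and C = (1 + δ_ij) ∈ ℤ^{n×n} (diagonal entries 2, off-diagonal entries 1). Then the group Aut(C) = {A ∈ GL(n, ℤ) : AᵀCA = C} is isomorphic to S_{n+1} × Z/2. Concretely, with Q the (n+1)×n matrix whose first n rows form the identity and whose last row is (−1,…,−1), the map sending a signed permutation matrix ±P ∈ GL(n+1, ℤ) (P a permutation matrix) to the unique A with Q·A = ±P·Q is an isomorphism from {±P : P ∈ S_{n+1}} onto Aut(C). -/

import Mathlib

open Matrix



lemma stmt15_vec_decomp {m : ℕ} (v : Fin m → ℤ) (h0 : ∑ i, v i = 0)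
    (h2 : ∑ i, v i * v i = 2) :
    ∃ a b, a ≠ b ∧ v = fun i => (if i = a then (1:ℤ) else 0) - (if i = b then 1 else 0) := by
  have hnn : ∀ i, 0 ≤ v i * v i := fun i => mul_self_nonneg _
  have hle : ∀ i : Fin m, v i * v i ≤ 2 := by
    intro i
    calc v i * v i ≤ ∑ j, v j * v j :=
          Finset.single_le_sum (fun j _ => hnn j) (Finset.mem_univ i)
      _ = 2 := h2
  have hbound : ∀ i, -1 ≤ v i ∧ v i ≤ 1 := by
    intro i; constructor <;> nlinarith [hle i]
  have ha : ∃ a, v a = 1 := by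
    by_contra h
    push_neg at h
    have h1 : ∀ i ∈ Finset.univ, v i ≤ 0 := by
      intro i _
      have h2 := (hbound i).2
      have h3 := h i
      omega
    have hz := (Finset.sum_eq_zero_iff_of_nonpos h1).mp h0
    simp only [Finset.mem_univ, true_implies] at hz
    rw [Finset.sum_congr rfl (fun i _ => by rw [hz i])] at h2
    simp at h2
  have hb : ∃ b, v b = -1 := by
    by_contra h
    push_neg at h
    have h1 : ∀ i ∈ Finset.univ, 0 ≤ v i := by
      intro i _
      have h2 := (hbound i).1
      have h3 := h i
      omega
    have hz := (Finset.sum_eq_zero_iff_of_nonneg h1).mp h0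
    simp only [Finset.mem_univ, true_implies] at hz
    rw [Finset.sum_congr rfl (fun i _ => by rw [hz i])] at h2
    simp at h2
  obtain ⟨a, hva⟩ := ha
  obtain ⟨b, hvb⟩ := hb
  have hab : a ≠ b := by intro h; rw [h, hvb] at hva; omega
  have key : ∀ i, i ≠ a → i ≠ b → v i = 0 := by
    intro i hia hib
    have hsplit : ∑ j, v j * v j
        = v a * v a + (v b * v b + ∑ j ∈ (Finset.univ.erase a).erase b, v j * v j) := by
      rw [← Finset.add_sum_erase _ _ (Finset.mem_univ a),
          ← Finset.add_sum_erase _ _ (Finset.mem_erase.mpr ⟨Ne.symm hab, Finset.mem_univ b⟩)]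
    have hrest : ∑ j ∈ (Finset.univ.erase a).erase b, v j * v j = 0 := by
      rw [hsplit, hva, hvb] at h2; linarith
    have hz := (Finset.sum_eq_zero_iff_of_nonneg (fun j _ => hnn j)).mp hrest i
      (by simp [Finset.mem_erase, hia, hib])
    exact mul_self_eq_zero.mp hz
  refine ⟨a, b, hab, funext fun i => ?_⟩
  by_cases hia : i = a
  · subst hia; rw [hva, if_pos rfl, if_neg hab]; ring
  · by_cases hib : i = b
    · subst hib; rw [hvb, if_neg hia, if_pos rfl]; ring
    · rw [key i hia hib, if_neg hia, if_neg hib]; ring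

/-- For `n ≥ 2` and `C = (1 + δᵢⱼ)`, with `Q` the `(n+1)×n` matrix whose first `n` rows
form the identity and whose last row is `(−1,…,−1)`: every signed permutation matrix
`±P` of size `n+1` determines a unique `A` with `Q·A = ±P·Q`, and this `A` lies in
`Aut(C) = {A ∈ GL(n,ℤ) : AᵀCA = C}`; conversely every element of `Aut(C)` arises from a
unique signed permutation in this way.  (Hence `Aut(C) ≅ S_{n+1} × Z/2`.) -/
theorem stmt_15 (n : ℕ) (hn : 2 ≤ n)
    (C : Matrix (Fin n) (Fin n) ℤ)
    (hC : ∀ i j, C i j = 1 + if i = j then 1 else 0)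
    (Q : Matrix (Fin (n + 1)) (Fin n) ℤ)
    (hQ : ∀ i j, Q i j =
      if (i : ℕ) = (j : ℕ) then 1 else if (i : ℕ) = n then -1 else 0) :
    (∀ σ : Equiv.Perm (Fin (n + 1)), ∀ ε : ℤ, (ε = 1 ∨ ε = -1) →
      ∃! A : Matrix (Fin n) (Fin n) ℤ,
        Q * A = ε • (σ.permMatrix ℤ) * Q ∧ IsUnit A.det ∧ Aᵀ * C * A = C) ∧
    (∀ A : Matrix (Fin n) (Fin n) ℤ, IsUnit A.det → Aᵀ * C * A = C →
      ∃! p : Equiv.Perm (Fin (n + 1)) × ℤ, (p.2 = 1 ∨ p.2 = -1) ∧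
        Q * A = p.2 • (p.1.permMatrix ℤ) * Q) := by
  -- structural facts about Q
  have hQ' : ∀ i j, Q i j =
      (if i = Fin.castSucc j then (1:ℤ) else 0) - (if i = Fin.last n then 1 else 0) := by
    intro i j
    rw [hQ]
    by_cases h1 : (i:ℕ) = (j:ℕ)
    · have e1 : i = Fin.castSucc j := Fin.ext (by simpa using h1)
      have e2 : i ≠ Fin.last n := by
        rw [e1]; intro h; have h' := congrArg Fin.val h
        simp [Fin.last] at h'; omega
      rw [if_pos h1, if_pos e1, if_neg e2]; ring
    · have e1 : i ≠ Fin.castSucc j := fun h => h1 (by rw [h]; simp)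
      by_cases h2 : (i:ℕ) = n
      · have e2 : i = Fin.last n := Fin.ext (by simpa [Fin.last] using h2)
        rw [if_neg h1, if_pos h2, if_neg e1, if_pos e2]; ring
      · have e2 : i ≠ Fin.last n := fun h => h2 (by rw [h]; rfl)
        rw [if_neg h1, if_neg h2, if_neg e1, if_neg e2]; ring
  have hcolsum : ∀ j, ∑ i, Q i j = 0 := by
    intro j
    simp only [hQ']
    rw [Finset.sum_sub_distrib]
    simp
  have hsum_prod : ∀ a b : Fin (n+1),
      ∑ i, (if i = a then (1:ℤ) else 0) * (if i = b then 1 else 0)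
        = if a = b then 1 else 0 := by
    intro a b
    simp [ite_mul, Finset.sum_ite_eq']
    simp [eq_comm]
  have hCQQ : C = Qᵀ * Q := by
    ext j k
    rw [hC]
    simp only [Matrix.mul_apply, Matrix.transpose_apply, hQ']
    have expand : ∀ i : Fin (n+1),
        ((if i = Fin.castSucc j then (1:ℤ) else 0) - (if i = Fin.last n then 1 else 0)) *
        ((if i = Fin.castSucc k then (1:ℤ) else 0) - (if i = Fin.last n then 1 else 0))
        = (if i = Fin.castSucc j then (1:ℤ) else 0) * (if i = Fin.castSucc k then 1 else 0)
          + (if i = Fin.last n then (1:ℤ) else 0) * (if i = Fin.last n then 1 else 0)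
          - (if i = Fin.castSucc j then (1:ℤ) else 0) * (if i = Fin.last n then 1 else 0)
          - (if i = Fin.last n then (1:ℤ) else 0) * (if i = Fin.castSucc k then 1 else 0) := by
      intro i; ring
    rw [Finset.sum_congr rfl (fun i _ => expand i)]
    have hcl : ∀ l : Fin n, Fin.castSucc l ≠ Fin.last n := by
      intro l h
      have := congrArg Fin.val h
      simp [Fin.last] at this
      omega
    rw [Finset.sum_sub_distrib, Finset.sum_sub_distrib, Finset.sum_add_distrib,
        hsum_prod, hsum_prod, hsum_prod, hsum_prod]
    have h1 : ¬ (Fin.castSucc j = Fin.last n) := hcl j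
    have h2 : ¬ (Fin.last n = Fin.castSucc k) := fun h => hcl k h.symm
    rw [if_neg h1, if_neg h2, if_pos rfl]
    simp only [Fin.castSucc_inj]
    by_cases h : j = k <;> simp [h] <;> ring
  -- det C is nonzero
  have hdetC : C.det ≠ 0 := by
    set D : Matrix (Fin n) (Fin n) ℤ :=
      Matrix.of (fun k j => ((n:ℤ)+1) * (if k = j then 1 else 0) - 1) with hD
    have hCD : C * D = ((n:ℤ)+1) • (1 : Matrix (Fin n) (Fin n) ℤ) := by
      ext i j
      simp only [Matrix.mul_apply, Matrix.smul_apply, Matrix.one_apply, hC, hD,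
        Matrix.of_apply]
      have expand : ∀ k : Fin n,
          (1 + if i = k then (1:ℤ) else 0) * (((n:ℤ)+1) * (if k = j then 1 else 0) - 1)
          = ((n:ℤ)+1) * (if k = j then 1 else 0)
            + ((n:ℤ)+1) * ((if i = k then (1:ℤ) else 0) * (if k = j then 1 else 0))
            - (if i = k then (1:ℤ) else 0) - 1 := by
        intro k; ring
      rw [Finset.sum_congr rfl (fun k _ => expand k)]
      rw [Finset.sum_sub_distrib, Finset.sum_sub_distrib, Finset.sum_add_distrib,
        ← Finset.mul_sum, ← Finset.mul_sum]
      have e1 : ∑ k : Fin n, (if k = j then (1:ℤ) else 0) = 1 := by simp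
      have e2 : ∑ k : Fin n, (if i = k then (1:ℤ) else 0) * (if k = j then 1 else 0)
          = if i = j then 1 else 0 := by simp [ite_mul, Finset.sum_ite_eq]
      have e3 : ∑ k : Fin n, (if i = k then (1:ℤ) else 0) = 1 := by simp
      have e4 : ∑ _k : Fin n, (1:ℤ) = n := by simp
      rw [e1, e2, e3, e4]
      by_cases h : i = j <;> simp [h] <;> ring
    have hdet : C.det * D.det = ((n:ℤ)+1) ^ n := by
      have := congrArg Matrix.det hCD
      rwa [Matrix.det_mul, Matrix.det_smul, Matrix.det_one, mul_one,
        Fintype.card_fin] at this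
    intro h
    rw [h, zero_mul] at hdet
    have : ((n:ℤ)+1) ^ n ≠ 0 := pow_ne_zero _ (by positivity)
    exact this hdet.symm
  -- membership in Aut C forces unit determinant
  have hUnit : ∀ A : Matrix (Fin n) (Fin n) ℤ, Aᵀ * C * A = C → IsUnit A.det := by
    intro A hA
    have h1 : A.det * C.det * A.det = C.det := by
      have := congrArg Matrix.det hA
      rwa [Matrix.det_mul, Matrix.det_mul, Matrix.det_transpose] at this
    have h2 : C.det * (A.det * A.det - 1) = 0 := by ring_nf; linarith [h1]
    have h3 : A.det * A.det - 1 = 0 := by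
      rcases mul_eq_zero.mp h2 with h | h
      · exact absurd h hdetC
      · exact h
    exact IsUnit.of_mul_eq_one A.det (by linarith)
  -- rows of Q
  have hQrow : ∀ (j l : Fin n), Q (Fin.castSucc j) l = if j = l then 1 else 0 := by
    intro j l
    rw [hQ]
    have h2 : ((Fin.castSucc j : Fin (n+1)) : ℕ) ≠ n := by
      simp; omega
    by_cases h : j = l
    · rw [if_pos (by simp [h])]; simp [h]
    · rw [if_neg (by simpa [Fin.ext_iff] using fun hh => h (Fin.ext hh)), if_neg h2,
        if_neg h]
  have hQlast : ∀ l : Fin n, Q (Fin.last n) l = -1 := by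
    intro l
    rw [hQ]
    have h1 : ((Fin.last n : Fin (n+1)) : ℕ) = n := rfl
    have h2 : (l : ℕ) < n := l.isLt
    rw [if_neg (by omega), if_pos h1]
  have hrow : ∀ (M : Matrix (Fin n) (Fin n) ℤ) (j k : Fin n),
      (Q * M) (Fin.castSucc j) k = M j k := by
    intro M j k
    simp only [Matrix.mul_apply, hQrow, ite_mul, one_mul, zero_mul]
    simp [Finset.sum_ite_eq]
  have hlastrow : ∀ (M : Matrix (Fin n) (Fin n) ℤ) (k : Fin n),
      (Q * M) (Fin.last n) k = - ∑ l, M l k := by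
    intro M k
    simp [Matrix.mul_apply, hQlast]
  have hQcancel : ∀ (M M' : Matrix (Fin n) (Fin n) ℤ), Q * M = Q * M' → M = M' := by
    intro M M' h
    ext j k
    rw [← hrow M j k, ← hrow M' j k, h]
  have hPQ : ∀ (σ : Equiv.Perm (Fin (n+1))) (ε : ℤ) (i : Fin (n+1)) (k : Fin n),
      ((ε • σ.permMatrix ℤ) * Q) i k = ε * Q (σ i) k := by
    intro σ ε i k
    rw [Matrix.smul_mul, Matrix.smul_apply, PEquiv.toMatrix_toPEquiv_mul,
      Matrix.submatrix_apply, id_eq, smul_eq_mul]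
  -- Part 1
  have part1 : ∀ σ : Equiv.Perm (Fin (n + 1)), ∀ ε : ℤ, (ε = 1 ∨ ε = -1) →
      ∃! A : Matrix (Fin n) (Fin n) ℤ,
        Q * A = ε • (σ.permMatrix ℤ) * Q ∧ IsUnit A.det ∧ Aᵀ * C * A = C := by
    intro σ ε hε
    set A : Matrix (Fin n) (Fin n) ℤ :=
      Matrix.of (fun j k => ((ε • σ.permMatrix ℤ) * Q) (Fin.castSucc j) k) with hA
    have hQA : Q * A = ε • (σ.permMatrix ℤ) * Q := by
      ext i k
      refine Fin.lastCases ?_ ?_ i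
      · -- last row
        rw [hlastrow]
        have hsum : ∑ i : Fin (n+1), Q (σ i) k = 0 := by
          rw [Equiv.sum_comp σ (fun i => Q i k)]
          exact hcolsum k
        rw [Fin.sum_univ_castSucc] at hsum
        have hAl : ∀ l : Fin n, A l k = ε * Q (σ (Fin.castSucc l)) k := by
          intro l
          rw [hA, Matrix.of_apply, hPQ]
        rw [Finset.sum_congr rfl (fun l _ => hAl l), ← Finset.mul_sum, hPQ]
        linear_combination (-ε) * hsum
      · intro j
        rw [hrow, hA, Matrix.of_apply]
    have hACA : Aᵀ * C * A = C := by
      have h1 : Aᵀ * C * A = (Q * A)ᵀ * (Q * A) := by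
        rw [hCQQ]
        simp only [Matrix.transpose_mul, Matrix.mul_assoc]
      rw [h1, hQA]
      ext j k
      rw [hCQQ]
      simp only [Matrix.mul_apply, Matrix.transpose_apply, hPQ]
      rw [← Equiv.sum_comp σ (fun i => Q i j * Q i k)]
      refine Finset.sum_congr rfl (fun i _ => ?_)
      rcases hε with h | h <;> rw [h] <;> ring
    refine ⟨A, ⟨hQA, hUnit A hACA, hACA⟩, ?_⟩
    intro A' hA'
    exact hQcancel A' A (by rw [hA'.1, hQA])
  -- uniqueness of signed-permutation representation, rowwise
  have hrowuniq : ∀ (x y : Fin (n+1)) (ε ε' : ℤ), (ε = 1 ∨ ε = -1) → (ε' = 1 ∨ ε' = -1) →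
      (∀ j, ε * Q x j = ε' * Q y j) → x = y ∧ ε = ε' := by
    have hj01 : (⟨0, by omega⟩ : Fin n) ≠ ⟨1, by omega⟩ := by
      intro h; have := congrArg Fin.val h; simp at this
    intro x y ε ε' hε hε'
    refine Fin.lastCases ?_ ?_ x
    · refine Fin.lastCases ?_ ?_ y
      · intro h
        refine ⟨rfl, ?_⟩
        have h1 := h ⟨0, by omega⟩
        rw [hQlast] at h1
        linarith
      · intro k h
        exfalso
        have hj' : (if k = ⟨0, by omega⟩ then (⟨1, by omega⟩ : Fin n) else ⟨0, by omega⟩) ≠ k := by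
          split_ifs with h'
          · rw [h']; exact hj01.symm
          · exact fun hh => h' hh.symm
        have h2 := h (if k = ⟨0, by omega⟩ then (⟨1, by omega⟩ : Fin n) else ⟨0, by omega⟩)
        rw [hQlast, hQrow, if_neg (fun hh => hj' hh.symm)] at h2
        rcases hε with he | he <;> rw [he] at h2 <;> norm_num at h2
    · intro jx
      refine Fin.lastCases ?_ ?_ y
      · intro h
        exfalso
        have hj' : (if jx = ⟨0, by omega⟩ then (⟨1, by omega⟩ : Fin n) else ⟨0, by omega⟩) ≠ jx := by
          split_ifs with h'
          · rw [h']; exact hj01.symm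
          · exact fun hh => h' hh.symm
        have h2 := h (if jx = ⟨0, by omega⟩ then (⟨1, by omega⟩ : Fin n) else ⟨0, by omega⟩)
        rw [hQlast, hQrow, if_neg (fun hh => hj' hh.symm)] at h2
        rcases hε' with he | he <;> rw [he] at h2 <;> norm_num at h2
      · intro k h
        have h2 := h jx
        rw [hQrow, hQrow, if_pos rfl] at h2
        by_cases hjk : jx = k
        · subst hjk
          rw [if_pos rfl] at h2
          exact ⟨rfl, by linarith⟩
        · rw [if_neg (fun hh => hjk hh.symm)] at h2
          exfalso
          rcases hε with he | he <;> rw [he] at h2 <;> norm_num at h2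
  -- Part 2
  have part2 : ∀ A : Matrix (Fin n) (Fin n) ℤ, IsUnit A.det → Aᵀ * C * A = C →
      ∃! p : Equiv.Perm (Fin (n + 1)) × ℤ, (p.2 = 1 ∨ p.2 = -1) ∧
        Q * A = p.2 • (p.1.permMatrix ℤ) * Q := by
    intro A hdet hACA
    have hBtB : ∀ j k, ((Q * A)ᵀ * (Q * A)) j k = C j k := by
      intro j k
      have h1 : (Q * A)ᵀ * (Q * A) = Aᵀ * C * A := by
        rw [hCQQ]
        simp only [Matrix.transpose_mul, Matrix.mul_assoc]
      rw [h1, hACA]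
    have hBcol : ∀ k, ∑ i, (Q * A) i k = 0 := by
      intro k
      simp only [Matrix.mul_apply]
      rw [Finset.sum_comm]
      refine Finset.sum_eq_zero (fun l _ => ?_)
      rw [← Finset.sum_mul, hcolsum, zero_mul]
    have hBdiag : ∀ k, ∑ i, (Q * A) i k * (Q * A) i k = 2 := by
      intro k
      have h := hBtB k k
      rw [hC] at h
      simp only [Matrix.mul_apply, Matrix.transpose_apply] at h
      simp only [Matrix.mul_apply]
      rw [h]; simp
    have hBoff : ∀ j k, j ≠ k → ∑ i, (Q * A) i j * (Q * A) i k = 1 := by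
      intro j k hjk
      have h := hBtB j k
      rw [hC] at h
      simp only [Matrix.mul_apply, Matrix.transpose_apply] at h
      simp only [Matrix.mul_apply]
      rw [h, if_neg hjk]
      norm_num
    choose a b hab hv using fun k => stmt15_vec_decomp (fun i => (Q * A) i k)
      (hBcol k) (hBdiag k)
    have hv' : ∀ k i, (Q * A) i k
        = (if i = a k then (1:ℤ) else 0) - (if i = b k then 1 else 0) :=
      fun k i => congrFun (hv k) i
    have hcross : ∀ j k, j ≠ k →
        ((a j = a k ∧ b j ≠ b k) ∨ (a j ≠ a k ∧ b j = b k)) := by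
      intro j k hjk
      have h1 := hBoff j k hjk
      rw [Finset.sum_congr rfl (fun i _ => by rw [hv' j i, hv' k i])] at h1
      have expand : ∀ i : Fin (n+1),
          ((if i = a j then (1:ℤ) else 0) - (if i = b j then 1 else 0)) *
          ((if i = a k then (1:ℤ) else 0) - (if i = b k then 1 else 0))
          = (if i = a j then (1:ℤ) else 0) * (if i = a k then 1 else 0)
            + (if i = b j then (1:ℤ) else 0) * (if i = b k then 1 else 0)
            - (if i = a j then (1:ℤ) else 0) * (if i = b k then 1 else 0)
            - (if i = b j then (1:ℤ) else 0) * (if i = a k then 1 else 0) := by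
        intro i; ring
      rw [Finset.sum_congr rfl (fun i _ => expand i), Finset.sum_sub_distrib,
        Finset.sum_sub_distrib, Finset.sum_add_distrib,
        hsum_prod, hsum_prod, hsum_prod, hsum_prod] at h1
      by_cases c1 : a j = a k
      · have c3 : a j ≠ b k := fun h => hab k (c1.symm.trans h)
        have c4 : b j ≠ a k := fun h => hab j (c1.trans h.symm)
        rw [if_pos c1, if_neg c3, if_neg c4] at h1
        refine Or.inl ⟨c1, fun c2 => by rw [if_pos c2] at h1; omega⟩
      · refine Or.inr ⟨c1, ?_⟩
        by_contra c2
        rw [if_neg c1, if_neg c2] at h1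
        split_ifs at h1 <;> omega
    have hj01 : (⟨0, by omega⟩ : Fin n) ≠ ⟨1, by omega⟩ := by
      intro h; have := congrArg Fin.val h; simp at this
    -- generic construction of the permutation
    have build : ∀ (ε : ℤ) (c : Fin n → Fin (n+1)) (t : Fin (n+1)),
        (∀ j k, j ≠ k → c j ≠ c k) → (∀ j, c j ≠ t) →
        (∀ i j, (Q * A) i j
          = ε * ((if i = c j then (1:ℤ) else 0) - (if i = t then 1 else 0))) →
        ∃ σ : Equiv.Perm (Fin (n+1)), Q * A = ε • (σ.permMatrix ℤ) * Q := by
      intro ε c t hcinj hct hBv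
      set f : Fin (n+1) → Fin (n+1) := Fin.lastCases t (fun j => c j) with hf
      have hfc : ∀ j : Fin n, f (Fin.castSucc j) = c j := fun j => by
        rw [hf]; exact Fin.lastCases_castSucc j
      have hfl : f (Fin.last n) = t := by rw [hf]; exact Fin.lastCases_last
      have hfinj : Function.Injective f := by
        intro x y
        refine Fin.lastCases ?_ ?_ x
        · refine Fin.lastCases ?_ ?_ y
          · intro _; rfl
          · intro k hxy
            rw [hfl, hfc] at hxy
            exact absurd hxy.symm (hct k)
        · intro j
          refine Fin.lastCases ?_ ?_ y
          · intro hxy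
            rw [hfl, hfc] at hxy
            exact absurd hxy (hct j)
          · intro k hxy
            rw [hfc, hfc] at hxy
            by_cases hjk : j = k
            · rw [hjk]
            · exact absurd hxy (hcinj j k hjk)
      have hfbij : Function.Bijective f :=
        (Fintype.bijective_iff_injective_and_card f).mpr ⟨hfinj, rfl⟩
      set τ := Equiv.ofBijective f hfbij with hτ
      refine ⟨τ.symm, ?_⟩
      ext i k
      rw [hPQ]
      have hτ1 : (τ.symm i = Fin.castSucc k) ↔ (i = c k) := by
        rw [Equiv.symm_apply_eq]
        have : τ (Fin.castSucc k) = c k := hfc k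
        rw [this]
      have hτ2 : (τ.symm i = Fin.last n) ↔ (i = t) := by
        rw [Equiv.symm_apply_eq]
        have : τ (Fin.last n) = t := hfl
        rw [this]
      have e1 : (if τ.symm i = Fin.castSucc k then (1:ℤ) else 0)
          = (if i = c k then 1 else 0) := by
        by_cases h : i = c k
        · rw [if_pos h, if_pos (hτ1.mpr h)]
        · rw [if_neg h, if_neg (fun hh => h (hτ1.mp hh))]
      have e2 : (if τ.symm i = Fin.last n then (1:ℤ) else 0)
          = (if i = t then 1 else 0) := by
        by_cases h : i = t
        · rw [if_pos h, if_pos (hτ2.mpr h)]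
        · rw [if_neg h, if_neg (fun hh => h (hτ2.mp hh))]
      rw [hBv i k, hQ', e1, e2]
    -- existence
    obtain ⟨σ, ε, hε, hQA⟩ :
        ∃ σ : Equiv.Perm (Fin (n+1)), ∃ ε : ℤ, (ε = 1 ∨ ε = -1) ∧
          Q * A = ε • (σ.permMatrix ℤ) * Q := by
      by_cases hH : a ⟨0, by omega⟩ = a ⟨1, by omega⟩
      · have hall : ∀ j, a j = a ⟨0, by omega⟩ := by
          intro j
          by_cases h0 : j = ⟨0, by omega⟩
          · rw [h0]
          · by_cases h1 : j = ⟨1, by omega⟩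
            · rw [h1]; exact hH.symm
            · rcases hcross j ⟨0, by omega⟩ h0 with ⟨h, _⟩ | ⟨hna, hb0⟩
              · exact h
              · rcases hcross j ⟨1, by omega⟩ h1 with ⟨h', _⟩ | ⟨_, hb1⟩
                · exact h'.trans hH.symm
                · exfalso
                  rcases hcross ⟨0, by omega⟩ ⟨1, by omega⟩ hj01 with ⟨_, hbne⟩ | ⟨hane, _⟩
                  · exact hbne (hb0.symm.trans hb1)
                  · exact hane hH
        have hbinj : ∀ j k, j ≠ k → b j ≠ b k := by
          intro j k hjk
          rcases hcross j k hjk with ⟨_, h⟩ | ⟨hna, _⟩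
          · exact h
          · exact absurd ((hall j).trans (hall k).symm) hna
        have hbt : ∀ j, b j ≠ a ⟨0, by omega⟩ :=
          fun j h => hab j ((hall j).trans h.symm)
        obtain ⟨σ, hσ⟩ := build (-1) b (a ⟨0, by omega⟩) hbinj hbt (by
          intro i j
          rw [hv' j i, hall j]
          ring)
        exact ⟨σ, -1, Or.inr rfl, hσ⟩
      · have hT : b ⟨0, by omega⟩ = b ⟨1, by omega⟩ := by
          rcases hcross ⟨0, by omega⟩ ⟨1, by omega⟩ hj01 with ⟨h, _⟩ | ⟨_, h⟩
          · exact absurd h hH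
          · exact h
        have hall : ∀ j, b j = b ⟨0, by omega⟩ := by
          intro j
          by_cases h0 : j = ⟨0, by omega⟩
          · rw [h0]
          · by_cases h1 : j = ⟨1, by omega⟩
            · rw [h1]; exact hT.symm
            · rcases hcross j ⟨0, by omega⟩ h0 with ⟨ha0, hbn⟩ | ⟨_, h⟩
              · rcases hcross j ⟨1, by omega⟩ h1 with ⟨ha1, _⟩ | ⟨_, hb1⟩
                · exact absurd (ha0.symm.trans ha1) hH
                · exact hb1.trans hT.symm
              · exact h
        have hainj : ∀ j k, j ≠ k → a j ≠ a k := by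
          intro j k hjk
          rcases hcross j k hjk with ⟨_, hbne⟩ | ⟨hna, _⟩
          · exact absurd ((hall j).trans (hall k).symm) hbne
          · exact hna
        have hat : ∀ j, a j ≠ b ⟨0, by omega⟩ :=
          fun j h => hab j (h.trans (hall j).symm)
        obtain ⟨σ, hσ⟩ := build 1 a (b ⟨0, by omega⟩) hainj hat (by
          intro i j
          rw [hv' j i, hall j]
          ring)
        exact ⟨σ, 1, Or.inl rfl, hσ⟩
    -- uniqueness
    refine ⟨(σ, ε), ⟨hε, hQA⟩, ?_⟩
    intro p hp
    have h : ∀ i j, p.2 * Q (p.1 i) j = ε * Q (σ i) j := by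
      intro i j
      have h1 : ((p.2 • p.1.permMatrix ℤ) * Q) i j = ((ε • σ.permMatrix ℤ) * Q) i j := by
        rw [← hp.2, ← hQA]
      rwa [hPQ, hPQ] at h1
    have hpt : ∀ i, p.1 i = σ i ∧ p.2 = ε := fun i =>
      hrowuniq (p.1 i) (σ i) p.2 ε hp.1 hε (fun j => h i j)
    have he1 : p.1 = σ := Equiv.ext (fun i => (hpt i).1)
    have he2 : p.2 = ε := (hpt ⟨0, by omega⟩).2
    exact Prod.ext he1 he2
  exact ⟨part1, part2⟩
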